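/- Let d ≥ 2 be an integer and set t = ⌊d/2⌋. Every finite t-partite simple graph is isomorphic to a distance graph in ℝ^d: if the vertex set of a finite simple graph H can be partitioned into t parts such that no edge of H joins two vertices in the same part, then there exists an injective map φ from the vertex set of H into d-dimensional Euclidean space such that whenever u and v are adjacent in H, the Euclidean distance between φ(u) and φ(v) equals 1. -/

import Mathlib

open Real Finset

/-- Point supported on coordinates `a`, `a+1`. -/
noncomputable def dgPoint (d a : ℕ) (x y : ℝ) : EuclideanSpace ℝ (Fin d) :=
  WithLp.toLp 2 (fun j => if (j : ℕ) = a then x else if (j : ℕ) = a + 1 then y else 0)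

lemma dgPoint_apply (d a : ℕ) (x y : ℝ) (j : Fin d) :
    dgPoint d a x y j = if (j : ℕ) = a then x else if (j : ℕ) = a + 1 then y else 0 := rfl

lemma dgPoint_apply_mk (d a : ℕ) (x y : ℝ) (j : ℕ) (hj : j < d) :
    dgPoint d a x y ⟨j, hj⟩ = if j = a then x else if j = a + 1 then y else 0 := rfl

lemma dgPoint_dist (d a b : ℕ) (ha : a + 1 < d) (hb : b + 1 < d)
    (hab : a + 1 < b ∨ b + 1 < a) (x1 y1 x2 y2 : ℝ)
    (h1 : x1 ^ 2 + y1 ^ 2 = 1 / 2) (h2 : x2 ^ 2 + y2 ^ 2 = 1 / 2) :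
    dist (dgPoint d a x1 y1) (dgPoint d b x2 y2) = 1 := by
  rw [EuclideanSpace.dist_eq]
  have ha0 : a < d := by omega
  have hb0 : b < d := by omega
  have key : ∑ j : Fin d, dist (dgPoint d a x1 y1 j) (dgPoint d b x2 y2 j) ^ 2 = 1 := by
    have hsub : ({⟨a, ha0⟩, ⟨a + 1, ha⟩, ⟨b, hb0⟩, ⟨b + 1, hb⟩} : Finset (Fin d)) ⊆
        Finset.univ := Finset.subset_univ _
    rw [← Finset.sum_subset hsub]
    · have hd12 : (⟨a, ha0⟩ : Fin d) ≠ ⟨a + 1, ha⟩ := by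
        intro hh; rw [Fin.mk.injEq] at hh; omega
      have hd13 : (⟨a, ha0⟩ : Fin d) ≠ ⟨b, hb0⟩ := by
        intro hh; rw [Fin.mk.injEq] at hh; omega
      have hd14 : (⟨a, ha0⟩ : Fin d) ≠ ⟨b + 1, hb⟩ := by
        intro hh; rw [Fin.mk.injEq] at hh; omega
      have hd23 : (⟨a + 1, ha⟩ : Fin d) ≠ ⟨b, hb0⟩ := by
        intro hh; rw [Fin.mk.injEq] at hh; omega
      have hd24 : (⟨a + 1, ha⟩ : Fin d) ≠ ⟨b + 1, hb⟩ := by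
        intro hh; rw [Fin.mk.injEq] at hh; omega
      have hd34 : (⟨b, hb0⟩ : Fin d) ≠ ⟨b + 1, hb⟩ := by
        intro hh; rw [Fin.mk.injEq] at hh; omega
      rw [Finset.sum_insert (by simp [hd12, hd13, hd14]),
        Finset.sum_insert (by simp [hd23, hd24]),
        Finset.sum_insert (by simp [hd34]), Finset.sum_singleton]
      rw [dgPoint_apply_mk, dgPoint_apply_mk, dgPoint_apply_mk, dgPoint_apply_mk,
        dgPoint_apply_mk, dgPoint_apply_mk, dgPoint_apply_mk, dgPoint_apply_mk]
      rw [if_pos rfl, if_neg (by omega), if_neg (by omega), if_neg (by omega),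
        if_pos rfl, if_neg (by omega), if_neg (by omega), if_neg (by omega),
        if_neg (by omega), if_pos rfl, if_neg (by omega), if_neg (by omega),
        if_neg (by omega), if_pos rfl]
      simp only [Real.dist_eq, sub_zero, zero_sub, abs_neg, sq_abs]
      linarith [h1, h2]
    · intro j _ hj
      simp only [Finset.mem_insert, Finset.mem_singleton, not_or] at hj
      obtain ⟨hj1, hj2, hj3, hj4⟩ := hj
      have hv1 : (j : ℕ) ≠ a := fun hh => hj1 (Fin.ext hh)
      have hv2 : (j : ℕ) ≠ a + 1 := fun hh => hj2 (Fin.ext hh)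
      have hv3 : (j : ℕ) ≠ b := fun hh => hj3 (Fin.ext hh)
      have hv4 : (j : ℕ) ≠ b + 1 := fun hh => hj4 (Fin.ext hh)
      rw [dgPoint_apply, dgPoint_apply, if_neg hv1, if_neg hv2, if_neg hv3, if_neg hv4]
      simp
  rw [key, Real.sqrt_one]

/-- Every finite `⌊d/2⌋`-partite simple graph is isomorphic to a distance graph
in `ℝ^d`: if the vertices can be colored with `⌊d/2⌋` colors so that adjacent
vertices get distinct colors, then there is an injective map of the vertices
into `d`-dimensional Euclidean space sending adjacent pairs to pairs at
Euclidean distance exactly 1. -/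
theorem multipartite_is_distance_graph (d : ℕ) (hd : 2 ≤ d)
    (V : Type) [Fintype V] (H : SimpleGraph V)
    (p : V → Fin (d / 2)) (hp : ∀ u v, H.Adj u v → p u ≠ p v) :
    ∃ φ : V → EuclideanSpace ℝ (Fin d), Function.Injective φ ∧
      ∀ u v : V, H.Adj u v → dist (φ u) (φ v) = 1 := by
  classical
  by_cases hV : Nonempty V
  case neg =>
    exact ⟨fun _ => 0, fun u v _ => absurd ⟨u⟩ hV, fun u v _ => absurd ⟨u⟩ hV⟩
  set n := Fintype.card V with hn
  have hn0 : 0 < n := Fintype.card_pos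
  let ι : V ≃ Fin n := Fintype.equivFin V
  let θ : V → ℝ := fun v => (ι v : ℝ) * (Real.pi / n)
  have hθmem : ∀ v, θ v ∈ Set.Icc 0 Real.pi := by
    intro v
    have h1 : (0:ℝ) ≤ (ι v : ℝ) := by positivity
    have h2 : (ι v : ℝ) ≤ n := by exact_mod_cast le_of_lt (ι v).2
    have hπ : (0:ℝ) < Real.pi / n := by positivity
    constructor
    · positivity
    · calc (ι v : ℝ) * (Real.pi / n) ≤ n * (Real.pi / n) :=
            mul_le_mul_of_nonneg_right h2 (le_of_lt hπ)
        _ = Real.pi := by field_simp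
  have hθinj : Function.Injective θ := by
    intro u v h
    have hπ : (Real.pi / n) ≠ 0 := by positivity
    have h1 : (ι u : ℝ) = (ι v : ℝ) := mul_right_cancel₀ hπ h
    have h2 : ι u = ι v := by
      apply Fin.ext
      exact_mod_cast h1
    exact ι.injective h2
  let c : V → ℝ := fun v => Real.cos (θ v) / Real.sqrt 2
  let s : V → ℝ := fun v => Real.sin (θ v) / Real.sqrt 2
  have h2 : Real.sqrt 2 ^ 2 = 2 := Real.sq_sqrt (by norm_num)
  have hcs : ∀ v, c v ^ 2 + s v ^ 2 = 1 / 2 := by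
    intro v
    have h3 := Real.sin_sq_add_cos_sq (θ v)
    have : c v ^ 2 + s v ^ 2 =
        (Real.sin (θ v) ^ 2 + Real.cos (θ v) ^ 2) / 2 := by
      show (Real.cos (θ v) / Real.sqrt 2) ^ 2 + (Real.sin (θ v) / Real.sqrt 2) ^ 2 = _
      rw [div_pow, div_pow, h2]
      ring
    rw [this, h3]
  have hlt : ∀ v : V, 2 * (p v : ℕ) + 1 < d := by
    intro v
    have h1 : (p v : ℕ) < d / 2 := (p v).2
    omega
  have hlt0 : ∀ v : V, 2 * (p v : ℕ) < d := fun v => by have := hlt v; omega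
  refine ⟨fun v => dgPoint d (2 * (p v : ℕ)) (c v) (s v), ?_, ?_⟩
  · -- injectivity
    intro u v h
    dsimp only at h
    by_cases hpuv : p u = p v
    · -- same part: compare first coordinate
      have hc : c u = c v := by
        have h5 := congrFun (congrArg WithLp.ofLp h) (⟨2 * (p u : ℕ), hlt0 u⟩ : Fin d)
        rw [dgPoint_apply_mk, dgPoint_apply_mk, if_pos rfl, if_pos (by rw [hpuv])] at h5
        exact h5
      have hcos : Real.cos (θ u) = Real.cos (θ v) := by
        have hs2 : Real.sqrt 2 ≠ 0 := by positivity
        have : Real.cos (θ u) / Real.sqrt 2 = Real.cos (θ v) / Real.sqrt 2 := hc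
        field_simp at this
        exact this
      exact hθinj (Real.injOn_cos (hθmem u) (hθmem v) hcos)
    · -- different parts: contradiction
      exfalso
      have hne : (p u : ℕ) ≠ (p v : ℕ) := fun hh => hpuv (Fin.ext hh)
      have hc0 : c u = 0 := by
        have h5 := congrFun (congrArg WithLp.ofLp h) (⟨2 * (p u : ℕ), hlt0 u⟩ : Fin d)
        rw [dgPoint_apply_mk, dgPoint_apply_mk, if_pos rfl,
          if_neg (by omega), if_neg (by omega)] at h5
        exact h5
      have hs0 : s u = 0 := by
        have h5 := congrFun (congrArg WithLp.ofLp h) (⟨2 * (p u : ℕ) + 1, hlt u⟩ : Fin d)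
        rw [dgPoint_apply_mk, dgPoint_apply_mk, if_neg (by omega), if_pos rfl,
          if_neg (by omega), if_neg (by omega)] at h5
        exact h5
      have h6 := hcs u
      rw [hc0, hs0] at h6
      norm_num at h6
  · -- distances
    intro u v hadj
    have hpuv := hp u v hadj
    have hne : (p u : ℕ) ≠ (p v : ℕ) := fun hh => hpuv (Fin.ext hh)
    exact dgPoint_dist d _ _ (hlt u) (hlt v) (by omega) _ _ _ _ (hcs u) (hcs v)
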